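/- Let r be a nonzero complex number with r⁴ ≠ 1 and m = 1/r - r. Define (n-1)×(n-1) matrices M₁,…,M_{n-1} by the relations (△): Mᵢ has eigenvalue action ν_t(v_i) = r·v_i for t ∉ {i-1,i,i+1}, ν_i(v_i) = -(1/r)·v_i, ν_{i+1}(v_i) = r·(v_i + v_{i+1}), ν_{i-1}(v_i) = r·v_i + (1/r)·v_{i-1} on the standard basis (v_1,…,v_{n-1}). Then the Mᵢ satisfy the braid relations MᵢM_jMᵢ = M_jMᵢM_j for |i-j| = 1, MᵢM_j = M_jMᵢ for |i-j| ≥ 2, and Mᵢ² + m·Mᵢ = I for all i. -/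

import Mathlib

/-- The matrix `Mᵢ` of the set of relations `(△)`:
`Mᵢ vᵢ = -(1/r) vᵢ`, `Mᵢ vᵢ₋₁ = r (vᵢ₋₁ + vᵢ)`, `Mᵢ vᵢ₊₁ = r vᵢ₊₁ + (1/r) vᵢ`,
and `Mᵢ v_t = r v_t` for `t ∉ {i-1, i, i+1}`. -/
noncomputable def triMat (n : ℕ) (r : ℂ) (i : Fin (n - 1)) :
    Matrix (Fin (n - 1)) (Fin (n - 1)) ℂ :=
  Matrix.of fun a t =>
    if t = i then (if a = i then -r⁻¹ else 0)
    else if (t : ℕ) + 1 = (i : ℕ) then (if a = t ∨ a = i then r else 0)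
    else if (t : ℕ) = (i : ℕ) + 1 then
      (if a = t then r else if a = i then r⁻¹ else 0)
    else if a = t then r else 0

noncomputable def fv (n : ℕ) (r : ℂ) (i : Fin (n - 1)) : Fin (n - 1) → ℂ := fun b =>
  if b = i then -r⁻¹ - r else if (b : ℕ) + 1 = (i : ℕ) then r
  else if (b : ℕ) = (i : ℕ) + 1 then r⁻¹ else 0

noncomputable def Ov (n : ℕ) (r : ℂ) (i j : Fin (n - 1)) :
    Matrix (Fin (n - 1)) (Fin (n - 1)) ℂ :=
  Matrix.vecMulVec (Pi.single i 1) (fv n r j)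

lemma mulO (n : ℕ) (r : ℂ) (a b c d : Fin (n - 1)) :
    Ov n r a b * Ov n r c d = fv n r b c • Ov n r a d := by
  ext x y
  simp [Ov, Matrix.mul_apply, Matrix.vecMulVec_apply, Pi.single_apply, ite_mul, mul_ite,
    mul_zero, zero_mul, Finset.sum_ite_eq, Finset.sum_ite_eq']
  try (split_ifs <;> try ring)
  try ring

lemma tri_eq (n : ℕ) (r : ℂ) (i : Fin (n - 1)) :
    triMat n r i = r • 1 + Ov n r i i := by
  ext a t
  simp only [triMat, Matrix.of_apply, Matrix.add_apply, Matrix.smul_apply, Matrix.one_apply,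
    Ov, Matrix.vecMulVec_apply, Pi.single_apply, fv, smul_eq_mul, smul_ite, smul_zero]
  split_ifs <;> (try ring) <;> (exfalso; simp_all [Fin.ext_iff]) <;> omega

lemma fv_self (n : ℕ) (r : ℂ) (i : Fin (n - 1)) : fv n r i i = -r⁻¹ - r := by
  simp [fv]

lemma fv_succ (n : ℕ) (r : ℂ) (i j : Fin (n - 1)) (h : (i : ℕ) + 1 = (j : ℕ)) :
    fv n r i j = r⁻¹ := by
  have h1 : j ≠ i := by simp [Fin.ext_iff]; omega
  show (if j = i then -r⁻¹ - r else if (j : ℕ) + 1 = (i : ℕ) then r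
    else if (j : ℕ) = (i : ℕ) + 1 then r⁻¹ else 0) = r⁻¹
  rw [if_neg h1, if_neg (by omega), if_pos (by omega)]

lemma fv_pred (n : ℕ) (r : ℂ) (i j : Fin (n - 1)) (h : (i : ℕ) + 1 = (j : ℕ)) :
    fv n r j i = r := by
  have h1 : i ≠ j := by simp [Fin.ext_iff]; omega
  show (if i = j then -r⁻¹ - r else if (i : ℕ) + 1 = (j : ℕ) then r
    else if (i : ℕ) = (j : ℕ) + 1 then r⁻¹ else 0) = r
  rw [if_neg h1, if_pos h]

lemma fv_far (n : ℕ) (r : ℂ) (i j : Fin (n - 1))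
    (h : (i : ℕ) + 2 ≤ (j : ℕ) ∨ (j : ℕ) + 2 ≤ (i : ℕ)) : fv n r i j = 0 := by
  have h1 : j ≠ i := by simp [Fin.ext_iff]; omega
  have h2 : ¬((j : ℕ) + 1 = (i : ℕ)) := by omega
  have h3 : ¬((j : ℕ) = (i : ℕ) + 1) := by omega
  simp [fv, h1, h2, h3]

lemma braid_aux (n : ℕ) (r : ℂ) (i j : Fin (n - 1)) (h : (i : ℕ) + 1 = (j : ℕ)) :
    triMat n r i * triMat n r j * triMat n r i =
      triMat n r j * triMat n r i * triMat n r j := by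
  rw [tri_eq n r i, tri_eq n r j]
  simp only [add_mul, mul_add, smul_mul_assoc, mul_smul_comm, mul_one, one_mul, mulO,
    smul_smul, smul_add, fv_self, fv_succ n r i j h, fv_pred n r i j h]
  match_scalars <;> (field_simp; try ring) <;>
    (rcases eq_or_ne r 0 with hr | hr
     · subst hr; simp
     · field_simp)

theorem stmt_13 (n : ℕ) (hn : 3 ≤ n) (r m : ℂ) (hr : r ≠ 0)
    (hr4 : r ^ 4 ≠ 1) (hm : m = r⁻¹ - r) :
    (∀ i j : Fin (n - 1), (i : ℕ) + 1 = (j : ℕ) ∨ (j : ℕ) + 1 = (i : ℕ) →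
      triMat n r i * triMat n r j * triMat n r i =
        triMat n r j * triMat n r i * triMat n r j) ∧
    (∀ i j : Fin (n - 1), (i : ℕ) + 2 ≤ (j : ℕ) ∨ (j : ℕ) + 2 ≤ (i : ℕ) →
      triMat n r i * triMat n r j = triMat n r j * triMat n r i) ∧
    (∀ i : Fin (n - 1), triMat n r i ^ 2 + m • triMat n r i = 1) := by
  refine ⟨fun i j h => ?_, fun i j h => ?_, fun i => ?_⟩
  · rcases h with h | h
    · exact braid_aux n r i j h
    · exact (braid_aux n r j i h).symm
  · have hij : fv n r i j = 0 := fv_far n r i j h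
    have hji : fv n r j i = 0 := fv_far n r j i (h.symm.imp id id)
    rw [tri_eq n r i, tri_eq n r j]
    simp only [add_mul, mul_add, smul_mul_assoc, mul_smul_comm, mul_one, one_mul, mulO,
      smul_smul, smul_add, hij, hji, zero_smul, add_zero, zero_mul, mul_zero]
    match_scalars <;> ring
  · rw [sq, tri_eq n r i]
    simp only [add_mul, mul_add, smul_mul_assoc, mul_smul_comm, mul_one, one_mul, mulO,
      smul_smul, smul_add, fv_self, hm]
    match_scalars <;> (field_simp; try ring)
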